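/- For any unimodular lattice Γ ⊂ ℝ^d, A > d, and ν > 0, the elementary lattice sum f_A(ν, Γ, u) = Σ_{x ∈ Γ} (1 + ν|x − u|_∞)^{−A} satisfies sup_u f_A(ν, Γ, u) ≤ c_A (ν^{−d} + λ_d(Γ)^d), with c_A depending only on A and d. -/

import Mathlib

open scoped BigOperators
open MeasureTheory Set
open scoped ENNReal

/-- The lattice in `ℝ^d` generated by the columns of the matrix `B`. -/
def latticePts (d : ℕ) (B : Matrix (Fin d) (Fin d) ℝ) : Set (Fin d → ℝ) :=
  {x | ∃ m : Fin d → ℤ, x = B.mulVec fun i => (m i : ℝ)}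

/-- The `k`-th successive minimum of the lattice generated by `B`, for the sup norm. -/
noncomputable def succMin (d : ℕ) (B : Matrix (Fin d) (Fin d) ℝ) (k : ℕ) : ℝ :=
  sInf {t : ℝ | 0 ≤ t ∧ ∃ v : Fin k → (Fin d → ℝ),
    (∀ i, v i ∈ latticePts d B) ∧ LinearIndependent ℝ v ∧ ∀ i, ‖v i‖ ≤ t}


section aux
variable {d : ℕ}

noncomputable def entS (C : Matrix (Fin d) (Fin d) ℝ) : ℝ := ∑ i, ∑ j, |C i j|

lemma entS_nonneg (C : Matrix (Fin d) (Fin d) ℝ) : 0 ≤ entS C :=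
  Finset.sum_nonneg fun _ _ => Finset.sum_nonneg fun _ _ => abs_nonneg _

lemma mulVec_apply' (C : Matrix (Fin d) (Fin d) ℝ) (x : Fin d → ℝ) (i : Fin d) :
    C.mulVec x i = ∑ j, C i j * x j := by simp [Matrix.mulVec, dotProduct]

lemma abs_mulVec_le (C : Matrix (Fin d) (Fin d) ℝ) (x : Fin d → ℝ) {K : ℝ} (hK : 0 ≤ K)
    (hx : ∀ j, |x j| ≤ K) (i : Fin d) : |(C.mulVec x) i| ≤ entS C * K := by
  have h1 : |(C.mulVec x) i| ≤ ∑ j, |C i j| * K := by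
    rw [mulVec_apply']
    refine le_trans (Finset.abs_sum_le_sum_abs _ _) ?_
    refine Finset.sum_le_sum fun j _ => ?_
    rw [abs_mul]
    exact mul_le_mul_of_nonneg_left (hx j) (abs_nonneg _)
  refine h1.trans ?_
  rw [← Finset.sum_mul]
  refine mul_le_mul_of_nonneg_right ?_ hK
  exact Finset.single_le_sum (f := fun i => ∑ j, |C i j|)
    (fun _ _ => Finset.sum_nonneg fun _ _ => abs_nonneg _) (Finset.mem_univ i)

lemma finite_int_box (K : ℝ) : {m : Fin d → ℤ | ∀ i, |(m i : ℝ)| ≤ K}.Finite := by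
  refine (Set.finite_Icc (fun _ : Fin d => -⌈K⌉) (fun _ => ⌈K⌉)).subset ?_
  intro m hm
  constructor
  · intro i
    have h := (abs_le.mp (hm i)).1
    have : -(⌈K⌉ : ℝ) ≤ (m i : ℝ) := le_trans (by exact_mod_cast neg_le_neg (Int.le_ceil K)) h
    exact_mod_cast this
  · intro i
    have h := (abs_le.mp (hm i)).2
    have : (m i : ℝ) ≤ (⌈K⌉ : ℝ) := h.trans (Int.le_ceil K)
    exact_mod_cast this

lemma castVec (M : Matrix (Fin d) (Fin d) ℤ) (j : Fin d → ℤ) :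
    (fun i => ((M.mulVec j) i : ℝ)) = (M.map (Int.cast : ℤ → ℝ)).mulVec (fun i => (j i : ℝ)) := by
  funext i
  simp [Matrix.mulVec, dotProduct, Matrix.map_apply]

end aux

section mult
variable {d : ℕ}

noncomputable def Mreal (Mi : Matrix (Fin d) (Fin d) ℤ) : Matrix (Fin d) (Fin d) ℝ :=
  Mi.map (Int.cast : ℤ → ℝ)

lemma Mreal_det (Mi : Matrix (Fin d) (Fin d) ℤ) : (Mreal Mi).det = (Mi.det : ℝ) := by
  have := RingHom.map_det (Int.castRingHom ℝ) Mi
  simpa [Mreal, RingHom.mapMatrix_apply] using this.symm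

variable {Mi : Matrix (Fin d) (Fin d) ℤ}

lemma Mreal_unit (hMi : Mi.det ≠ 0) : IsUnit (Mreal Mi).det := by
  rw [Mreal_det]
  exact isUnit_iff_ne_zero.mpr (by exact_mod_cast hMi)

lemma WM (hMi : Mi.det ≠ 0) (x : Fin d → ℝ) :
    (Mreal Mi)⁻¹.mulVec ((Mreal Mi).mulVec x) = x := by
  rw [Matrix.mulVec_mulVec, Matrix.nonsing_inv_mul _ (Mreal_unit hMi), Matrix.one_mulVec]

lemma MW (hMi : Mi.det ≠ 0) (x : Fin d → ℝ) :
    (Mreal Mi).mulVec ((Mreal Mi)⁻¹.mulVec x) = x := by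
  rw [Matrix.mulVec_mulVec, Matrix.mul_nonsing_inv _ (Mreal_unit hMi), Matrix.one_mulVec]

/-- Integer points whose image under `(Mreal Mi)⁻¹` lies in the box `∏ (b i - 1, b i + N]`. -/
def Ybox (Mi : Matrix (Fin d) (Fin d) ℤ) (b : Fin d → ℝ) (N : ℝ) : Set (Fin d → ℤ) :=
  {m | ∀ i, ((Mreal Mi)⁻¹.mulVec (fun j => (m j : ℝ))) i ∈ Set.Ioc (b i - 1) (b i + N)}

lemma Ybox_finite (hMi : Mi.det ≠ 0) (b : Fin d → ℝ) (N : ℝ) : (Ybox Mi b N).Finite := by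
  set Kb : ℝ := (∑ i, |b i|) + |N| + 1 with hKb
  have hKb0 : 0 ≤ Kb := by
    have : 0 ≤ ∑ i, |b i| := Finset.sum_nonneg fun _ _ => abs_nonneg _
    positivity
  refine (finite_int_box (entS (Mreal Mi) * Kb)).subset ?_
  intro m hm
  intro i
  have hcast : (fun j => ((m j : ℝ))) = (Mreal Mi).mulVec ((Mreal Mi)⁻¹.mulVec (fun j => (m j : ℝ))) :=
    (MW hMi _).symm
  have hWb : ∀ j, |((Mreal Mi)⁻¹.mulVec (fun j => (m j : ℝ))) j| ≤ Kb := by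
    intro j
    have h := hm j
    rw [Set.mem_Ioc] at h
    have h1 : |b j| ≤ ∑ i, |b i| :=
      Finset.single_le_sum (f := fun i => |b i|) (fun _ _ => abs_nonneg _) (Finset.mem_univ j)
    have h2 : N ≤ |N| := le_abs_self N
    have hb : -(|b j|) ≤ b j := neg_abs_le _
    have hb' : b j ≤ |b j| := le_abs_self _
    have h3 : -(|N|) ≤ N := neg_abs_le _
    rw [abs_le]
    exact ⟨by linarith [h.1], by linarith [h.2]⟩
  calc |(m i : ℝ)| = |((Mreal Mi).mulVec ((Mreal Mi)⁻¹.mulVec (fun j => (m j : ℝ)))) i| := by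
        rw [← hcast]
    _ ≤ entS (Mreal Mi) * Kb := abs_mulVec_le _ _ hKb0 hWb i

end mult

section mult2
variable {d : ℕ} {Mi : Matrix (Fin d) (Fin d) ℤ}

lemma Ybox_ncard_le (hMi : Mi.det ≠ 0) (b : Fin d → ℝ) {N : ℝ} (hN : 0 ≤ N) :
    ((Ybox Mi b N).ncard : ℝ) ≤
      |(Mi.det : ℝ)| * (N + 2 * (entS ((Mreal Mi)⁻¹) + 1)) ^ d := by
  classical
  obtain ⟨C, hC⟩ : ∃ c : ℝ, c = entS ((Mreal Mi)⁻¹) + 1 := ⟨_, rfl⟩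
  rw [← hC]
  have hCe : entS ((Mreal Mi)⁻¹) ≤ C := by rw [hC]; linarith
  have hC0 : (0:ℝ) < C := by
    have := entS_nonneg ((Mreal Mi)⁻¹); rw [hC]; linarith
  have hfin := Ybox_finite hMi b N
  set F : Finset (Fin d → ℤ) := hfin.toFinset with hF
  set cell : (Fin d → ℤ) → Set (Fin d → ℝ) :=
    fun m => Set.univ.pi fun i => Set.Ico ((m i : ℝ)) ((m i : ℝ) + 1) with hcell
  have hmeas : ∀ m, MeasurableSet (cell m) :=
    fun m => MeasurableSet.univ_pi fun _ => measurableSet_Ico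
  have hvol : ∀ m, volume (cell m) = 1 := by
    intro m
    rw [hcell]
    rw [volume_pi_pi]
    simp
  have hdisj : (F : Set (Fin d → ℤ)).PairwiseDisjoint cell := by
    intro m _ m' _ hne
    refine Set.disjoint_left.mpr fun z hz hz' => hne ?_
    funext i
    have h1 := hz i (Set.mem_univ i)
    have h2 := hz' i (Set.mem_univ i)
    rw [Set.mem_Ico] at h1 h2
    have e1 : m i < m' i + 1 := (Int.cast_lt (R := ℝ)).mp (by push_cast; linarith [h1.1, h2.2])
    have e2 : m' i < m i + 1 := (Int.cast_lt (R := ℝ)).mp (by push_cast; linarith [h2.1, h1.2])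
    omega
  set bigS : Set (Fin d → ℝ) := Set.univ.pi fun i => Set.Icc (b i - C) (b i + N + C) with hbigS
  have hsub : (⋃ m ∈ F, cell m) ⊆ (Matrix.toLin' (Mreal Mi)) '' bigS := by
    intro z hz
    simp only [Set.mem_iUnion] at hz
    obtain ⟨m, hmF, hzm⟩ := hz
    have hmY : m ∈ Ybox Mi b N := by rwa [hF, Set.Finite.mem_toFinset] at hmF
    refine ⟨(Mreal Mi)⁻¹.mulVec z, ?_, by rw [Matrix.toLin'_apply]; exact MW hMi z⟩
    intro i _
    have hsplit : (Mreal Mi)⁻¹.mulVec z =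
        (Mreal Mi)⁻¹.mulVec (fun j => (m j : ℝ)) +
          (Mreal Mi)⁻¹.mulVec (z - fun j => (m j : ℝ)) := by
      rw [← Matrix.mulVec_add]
      congr 1
      funext j
      simp
    have hzb : ∀ j, |(z - fun j => (m j : ℝ)) j| ≤ 1 := by
      intro j
      have h := hzm j (Set.mem_univ j)
      rw [Set.mem_Ico] at h
      rw [abs_le]
      constructor
      · simp only [Pi.sub_apply]; linarith [h.1]
      · simp only [Pi.sub_apply]; linarith [h.2]
    have habs : |((Mreal Mi)⁻¹.mulVec (z - fun j => (m j : ℝ))) i| ≤ entS ((Mreal Mi)⁻¹) := by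
      have := abs_mulVec_le ((Mreal Mi)⁻¹) _ zero_le_one hzb i
      rw [mul_one] at this
      exact this
    have hY := hmY i
    rw [Set.mem_Ioc] at hY
    rw [hsplit]
    have habs' := abs_le.mp habs
    simp only [Pi.add_apply]
    constructor
    · rw [hC] at *; linarith [hY.1, habs'.1]
    · rw [hC] at *; linarith [hY.2, habs'.2]
  have hvolbig : volume bigS = ENNReal.ofReal ((N + 2 * C) ^ d) := by
    rw [hbigS, volume_pi_pi]
    have : ∀ i : Fin d, volume (Set.Icc (b i - C) (b i + N + C)) = ENNReal.ofReal (N + 2 * C) := by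
      intro i
      rw [Real.volume_Icc]
      congr 1
      ring
    simp only [this]
    rw [Finset.prod_const, Finset.card_univ, Fintype.card_fin,
      ← ENNReal.ofReal_pow (by linarith)]
  have hchain : (F.card : ℝ≥0∞) ≤ ENNReal.ofReal (|(Mi.det : ℝ)| * (N + 2 * C) ^ d) := by
    have h1 : (F.card : ℝ≥0∞) = ∑ m ∈ F, volume (cell m) := by
      simp [hvol]
    have h2 : ∑ m ∈ F, volume (cell m) = volume (⋃ m ∈ F, cell m) :=
      (measure_biUnion_finset hdisj fun m _ => hmeas m).symm
    have h3 : volume ((Matrix.toLin' (Mreal Mi)) '' bigS) =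
        ENNReal.ofReal |LinearMap.det (Matrix.toLin' (Mreal Mi))| * volume bigS :=
      Measure.addHaar_image_linearMap volume _ _
    rw [h1, h2]
    refine le_trans (measure_mono hsub) ?_
    rw [h3, LinearMap.det_toLin', Mreal_det, hvolbig, ← ENNReal.ofReal_mul (abs_nonneg _)]
  have hcard : ((Ybox Mi b N).ncard : ℝ) = (F.card : ℝ) := by
    rw [Set.ncard_eq_toFinset_card _ hfin]
  rw [hcard]
  have := ENNReal.toReal_le_of_le_ofReal
    (mul_nonneg (abs_nonneg _) (pow_nonneg (by linarith) d)) hchain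
  rwa [ENNReal.toReal_natCast] at this

end mult2
section mult3
variable {d : ℕ} {Mi : Matrix (Fin d) (Fin d) ℤ}

lemma Ybox_mem_translate (hMi : Mi.det ≠ 0) (b : Fin d → ℝ) (j : Fin d → ℤ) (m : Fin d → ℤ) :
    (m + Mi.mulVec j) ∈ Ybox Mi (b + fun i => (j i : ℝ)) 0 ↔ m ∈ Ybox Mi b 0 := by
  have hc : (fun k => (((m + Mi.mulVec j) k : ℤ) : ℝ)) =
      (fun k => (m k : ℝ)) + (Mreal Mi).mulVec (fun k => (j k : ℝ)) := by
    funext k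
    simp only [Pi.add_apply, Int.cast_add]
    congr 1
    exact congrFun (castVec Mi j) k
  have key : ∀ i, ((Mreal Mi)⁻¹.mulVec (fun k => (((m + Mi.mulVec j) k : ℤ) : ℝ))) i
      = ((Mreal Mi)⁻¹.mulVec (fun k => (m k : ℝ))) i + (j i : ℝ) := by
    intro i
    rw [hc, Matrix.mulVec_add]
    simp only [Pi.add_apply]
    congr 1
    rw [Matrix.mulVec_mulVec, Matrix.nonsing_inv_mul _ (Mreal_unit hMi), Matrix.one_mulVec]
  constructor
  · intro h i
    have hi := h i
    rw [key i] at hi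
    rw [Set.mem_Ioc] at hi ⊢
    simp only [Pi.add_apply] at hi
    exact ⟨by linarith [hi.1], by linarith [hi.2]⟩
  · intro h i
    have hi := h i
    rw [Set.mem_Ioc] at hi
    rw [key i, Set.mem_Ioc]
    simp only [Pi.add_apply]
    exact ⟨by linarith [hi.1], by linarith [hi.2]⟩

lemma Ybox_translate_ncard (hMi : Mi.det ≠ 0) (b : Fin d → ℝ) (j : Fin d → ℤ) :
    (Ybox Mi (b + fun i => (j i : ℝ)) 0).ncard = (Ybox Mi b 0).ncard := by
  have himg : (fun m => m + Mi.mulVec j) '' Ybox Mi b 0 = Ybox Mi (b + fun i => (j i : ℝ)) 0 := by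
    ext m'
    constructor
    · rintro ⟨m, hm, rfl⟩
      exact (Ybox_mem_translate hMi b j m).mpr hm
    · intro hm'
      have hmm : m' - Mi.mulVec j + Mi.mulVec j = m' := by
        funext k; simp
      refine ⟨m' - Mi.mulVec j, ?_, hmm⟩
      have h2 := (Ybox_mem_translate hMi b j (m' - Mi.mulVec j)).mp
      apply h2
      rwa [hmm]
  rw [← himg, Set.ncard_image_of_injective _ (add_left_injective _)]

lemma Ybox_zero_ncard_le (hMi : Mi.det ≠ 0) (b : Fin d → ℝ) :
    (Ybox Mi b 0).ncard ≤ Mi.det.natAbs := by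
  classical
  obtain ⟨D, hD⟩ : ∃ c : ℝ, c = 2 * (entS ((Mreal Mi)⁻¹) + 1) := ⟨_, rfl⟩
  have hD0 : 0 < D := by
    have := entS_nonneg ((Mreal Mi)⁻¹); rw [hD]; linarith
  set q := (Ybox Mi b 0).ncard with hq
  have key : ∀ N : ℕ, 1 ≤ N → (q : ℝ) * (N : ℝ) ^ d ≤ |(Mi.det : ℝ)| * ((N : ℝ) + D) ^ d := by
    intro N hN
    set J : Finset (Fin d → ℤ) := Finset.Icc (fun _ => (1 : ℤ)) (fun _ => (N : ℤ)) with hJ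
    have hJcard : J.card = N ^ d := by
      have h : (((N : ℤ) + 1 - 1)).toNat = N := by omega
      rw [hJ, Pi.card_Icc]
      simp only [Int.card_Icc, h]
      rw [Finset.prod_const, Finset.card_univ, Fintype.card_fin]
    set S : (Fin d → ℤ) → Finset (Fin d → ℤ) :=
      fun j => (Ybox_finite hMi (b + fun i => (j i : ℝ)) 0).toFinset with hS
    have hScard : ∀ j, (S j).card = q := by
      intro j
      rw [hS]
      rw [← Set.ncard_eq_toFinset_card _ (Ybox_finite hMi _ 0), Ybox_translate_ncard hMi]
    have hSsub : ∀ j ∈ J, S j ⊆ (Ybox_finite hMi b (N : ℝ)).toFinset := by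
      intro j hj m hm
      rw [hJ, Finset.mem_Icc] at hj
      rw [hS, Set.Finite.mem_toFinset] at hm
      rw [Set.Finite.mem_toFinset]
      intro i
      have hi := hm i
      rw [Set.mem_Ioc] at hi ⊢
      simp only [Pi.add_apply] at hi
      have hj1 : (1 : ℝ) ≤ (j i : ℝ) := by exact_mod_cast hj.1 i
      have hj2 : (j i : ℝ) ≤ (N : ℝ) := by exact_mod_cast hj.2 i
      exact ⟨by linarith [hi.1], by linarith [hi.2]⟩
    have hdisjJ : ∀ j ∈ J, ∀ j' ∈ J, j ≠ j' → Disjoint (S j) (S j') := by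
      intro j _ j' _ hne
      rw [Finset.disjoint_left]
      intro m hm hm'
      apply hne
      funext i
      rw [hS, Set.Finite.mem_toFinset] at hm hm'
      have h1 := hm i; have h2 := hm' i
      rw [Set.mem_Ioc] at h1 h2
      simp only [Pi.add_apply] at h1 h2
      have e1 : (j' i : ℝ) - 1 < (j i : ℝ) := by linarith [h1.2, h2.1]
      have e2 : (j i : ℝ) - 1 < (j' i : ℝ) := by linarith [h1.1, h2.2]
      have e1' : j' i - 1 < j i := by exact_mod_cast e1
      have e2' : j i - 1 < j' i := by exact_mod_cast e2
      omega
    have hsum : q * N ^ d ≤ (Ybox Mi b (N : ℝ)).ncard := by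
      have h1 : ∑ j ∈ J, (S j).card = q * N ^ d := by
        rw [Finset.sum_congr rfl fun j _ => hScard j, Finset.sum_const, hJcard, smul_eq_mul,
          mul_comm]
      have h2 : (J.biUnion S).card = ∑ j ∈ J, (S j).card := Finset.card_biUnion hdisjJ
      have h3 : J.biUnion S ⊆ (Ybox_finite hMi b (N : ℝ)).toFinset := by
        intro m hm
        rw [Finset.mem_biUnion] at hm
        obtain ⟨j, hj, hmj⟩ := hm
        exact hSsub j hj hmj
      have h4 := Finset.card_le_card h3
      rw [h2, h1] at h4
      rwa [Set.ncard_eq_toFinset_card _ (Ybox_finite hMi b (N : ℝ))]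
    have hcardle := Ybox_ncard_le hMi b (N := (N : ℝ)) (by positivity)
    rw [← hD] at hcardle
    calc (q : ℝ) * (N : ℝ) ^ d ≤ ((Ybox Mi b (N : ℝ)).ncard : ℝ) * 1 := by
          rw [mul_one]
          exact_mod_cast hsum
      _ ≤ |(Mi.det : ℝ)| * ((N : ℝ) + D) ^ d := by
          rw [mul_one]
          exact hcardle
  -- now take the limit N → ∞
  have hten : Filter.Tendsto (fun N : ℕ => |(Mi.det : ℝ)| * ((1 : ℝ) + D / N) ^ d)
      Filter.atTop (nhds (|(Mi.det : ℝ)| * 1)) := by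
    have h1 : Filter.Tendsto (fun N : ℕ => (1 : ℝ) + D / N) Filter.atTop (nhds 1) := by
      have := tendsto_const_div_atTop_nhds_zero_nat D
      have h2 := Filter.Tendsto.const_add (1 : ℝ) this
      simpa using h2
    have h2 := h1.pow d
    simp only [one_pow] at h2
    exact h2.const_mul _
  have hfinal : (q : ℝ) ≤ |(Mi.det : ℝ)| * 1 := by
    refine ge_of_tendsto hten ?_
    filter_upwards [Filter.eventually_ge_atTop 1] with N hN
    have hNpos : (0 : ℝ) < (N : ℝ) ^ d := by
      have : (0:ℝ) < (N:ℝ) := by exact_mod_cast hN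
      positivity
    have hkey := key N hN
    have heq : |(Mi.det : ℝ)| * ((1 : ℝ) + D / N) ^ d
        = |(Mi.det : ℝ)| * ((N : ℝ) + D) ^ d / (N : ℝ) ^ d := by
      rw [mul_div_assoc, ← div_pow]
      congr 2
      field_simp
    rw [heq, le_div_iff₀ hNpos]
    exact hkey
  rw [mul_one] at hfinal
  have : ((Mi.det.natAbs : ℕ) : ℝ) = |(Mi.det : ℝ)| := by
    rw [Nat.cast_natAbs, Int.cast_abs]
  rw [← this] at hfinal
  exact_mod_cast hfinal

end mult3
section count
open MeasureTheory Set
open scoped ENNReal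

variable {d : ℕ} {B : Matrix (Fin d) (Fin d) ℝ} {Mi : Matrix (Fin d) (Fin d) ℤ} {L : ℝ}

/-- The set of lattice points within distance `ρ` of `u`. -/
def latT (B : Matrix (Fin d) (Fin d) ℝ) (u : Fin d → ℝ) (ρ : ℝ) : Set (Fin d → ℤ) :=
  {m | ‖B.mulVec (fun j => (m j : ℝ)) - u‖ ≤ ρ}

lemma count_bound (hd : 0 < d) (hB : |B.det| = 1) (hMi : Mi.det ≠ 0)
    (hL : ∀ i j, |(B * Mreal Mi) i j| ≤ L) (u : Fin d → ℝ) {ρ : ℝ} (hρ : 0 ≤ ρ) :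
    (latT B u ρ).Finite ∧ ((latT B u ρ).ncard : ℝ) ≤ (2 * (ρ + d * L)) ^ d := by
  classical
  have hL0 : 0 ≤ L := le_trans (abs_nonneg _) (hL ⟨0, hd⟩ ⟨0, hd⟩)
  have hr0 : 0 ≤ ρ + d * L := by positivity
  set V : Matrix (Fin d) (Fin d) ℝ := B * Mreal Mi with hV
  have hBdet : B.det ≠ 0 := by
    intro h; rw [h] at hB; simp at hB
  have hBunit : IsUnit B.det := isUnit_iff_ne_zero.mpr hBdet
  have hVdet : V.det = B.det * (Mi.det : ℝ) := by
    rw [hV, Matrix.det_mul, Mreal_det]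
  have hVdet0 : V.det ≠ 0 := by
    rw [hVdet]
    exact mul_ne_zero hBdet (by exact_mod_cast hMi)
  have hVunit : IsUnit V.det := isUnit_iff_ne_zero.mpr hVdet0
  have hVabs : |V.det| = ((Mi.det.natAbs : ℕ) : ℝ) := by
    rw [hVdet, abs_mul, hB, one_mul, Nat.cast_natAbs, Int.cast_abs]
  have hVW : ∀ x, V.mulVec (V⁻¹.mulVec x) = x := fun x => by
    rw [Matrix.mulVec_mulVec, Matrix.mul_nonsing_inv _ hVunit, Matrix.one_mulVec]
  have hWV : ∀ x, V⁻¹.mulVec (V.mulVec x) = x := fun x => by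
    rw [Matrix.mulVec_mulVec, Matrix.nonsing_inv_mul _ hVunit, Matrix.one_mulVec]
  have hVinvB : V⁻¹ * B = (Mreal Mi)⁻¹ := by
    rw [hV, Matrix.mul_inv_rev, Matrix.mul_assoc, Matrix.nonsing_inv_mul _ hBunit,
      Matrix.mul_one]
  set x : (Fin d → ℤ) → (Fin d → ℝ) := fun m => B.mulVec (fun j => (m j : ℝ)) with hx
  set Q : Set (Fin d → ℝ) := Set.univ.pi fun _ => Set.Ico (0:ℝ) 1 with hQ
  set cell : (Fin d → ℤ) → Set (Fin d → ℝ) :=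
    fun m => {z | ∀ i, (V⁻¹.mulVec (z - x m)) i ∈ Set.Ico (0:ℝ) 1} with hcell
  have hcont : ∀ m i, Continuous fun z : Fin d → ℝ => (V⁻¹.mulVec (z - x m)) i := by
    intro m i
    simp only [mulVec_apply']
    refine continuous_finset_sum _ fun j _ => ?_
    exact continuous_const.mul ((continuous_apply j).sub continuous_const)
  have hmeas : ∀ m, MeasurableSet (cell m) := by
    intro m
    have hc : cell m = ⋂ i, (fun z => (V⁻¹.mulVec (z - x m)) i) ⁻¹' (Set.Ico (0:ℝ) 1) := by
      ext z; simp [hcell, Set.mem_iInter]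
    rw [hc]
    exact MeasurableSet.iInter fun i => (hcont m i).measurable measurableSet_Ico
  have himage : ∀ m, cell m = (fun t => x m + V.mulVec t) '' Q := by
    intro m
    ext z
    constructor
    · intro hz
      refine ⟨V⁻¹.mulVec (z - x m), fun i _ => hz i, ?_⟩
      show x m + V.mulVec (V⁻¹.mulVec (z - x m)) = z
      rw [hVW (z - x m)]
      funext k; simp
    · rintro ⟨t, ht, rfl⟩
      intro i
      have h1 : x m + V.mulVec t - x m = V.mulVec t := by funext k; simp
      have h2 : V⁻¹.mulVec (x m + V.mulVec t - x m) = t := by rw [h1, hWV]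
      rw [h2]
      exact ht i (Set.mem_univ i)
  have hvolQ : volume Q = 1 := by
    rw [hQ, volume_pi_pi]; simp
  have hvolcell : ∀ m, volume (cell m) = ENNReal.ofReal |V.det| := by
    intro m
    rw [himage m]
    have himg2 : (fun t => x m + V.mulVec t) '' Q
        = (fun y => y + (-(x m))) ⁻¹' ((Matrix.toLin' V) '' Q) := by
      ext z
      simp only [Set.mem_image, Set.mem_preimage, Matrix.toLin'_apply]
      constructor
      · rintro ⟨t, ht, rfl⟩
        exact ⟨t, ht, by funext k; simp⟩
      · rintro ⟨t, ht, hz⟩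
        refine ⟨t, ht, ?_⟩
        funext k
        have := congrFun hz k
        simp at this ⊢
        linarith
    rw [himg2, measure_preimage_add_right, Measure.addHaar_image_linearMap,
      LinearMap.det_toLin', hvolQ, mul_one]
  have hkey : ∀ s : Finset (Fin d → ℤ), ↑s ⊆ latT B u ρ →
      (s.card : ℝ) ≤ (2 * (ρ + d * L)) ^ d := by
    intro s hs
    set n : ℕ := Mi.det.natAbs with hn
    have hn0 : n ≠ 0 := by rwa [hn, ne_eq, Int.natAbs_eq_zero]
    set bb : Set (Fin d → ℝ) :=
      Set.univ.pi fun i => Set.Icc (u i - (ρ + d*L)) (u i + (ρ + d*L)) with hbb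
    have hbbmeas : MeasurableSet bb := MeasurableSet.univ_pi fun _ => measurableSet_Icc
    have hbbvol : volume bb = ENNReal.ofReal ((2*(ρ + d*L))^d) := by
      rw [hbb, volume_pi_pi]
      have hv : ∀ i : Fin d, volume (Set.Icc (u i - (ρ + d*L)) (u i + (ρ + d*L)))
          = ENNReal.ofReal (2*(ρ + d*L)) := by
        intro i; rw [Real.volume_Icc]; congr 1; ring
      simp only [hv]
      rw [Finset.prod_const, Finset.card_univ, Fintype.card_fin,
        ← ENNReal.ofReal_pow (by positivity)]
    have hcellsub : ∀ m ∈ s, cell m ⊆ bb := by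
      intro m hms z hz
      have hmT : m ∈ latT B u ρ := hs hms
      rw [himage m] at hz
      obtain ⟨t, ht, rfl⟩ := hz
      intro i _
      rw [Set.mem_Icc]
      have h1 : |x m i - u i| ≤ ρ := by
        have h2 : ‖x m - u‖ ≤ ρ := hmT
        calc |x m i - u i| = ‖(x m - u) i‖ := by simp [Real.norm_eq_abs]
          _ ≤ ‖x m - u‖ := norm_le_pi_norm _ i
          _ ≤ ρ := h2
      have h2 : |V.mulVec t i| ≤ d * L := by
        have hb : ∀ j, |t j| ≤ 1 := by
          intro j
          have h3 := ht j (Set.mem_univ j)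
          rw [Set.mem_Ico] at h3
          rw [abs_le]
          exact ⟨by linarith [h3.1], by linarith [h3.2]⟩
        rw [mulVec_apply']
        refine le_trans (Finset.abs_sum_le_sum_abs _ _) ?_
        have hterm : ∀ j, |V i j * t j| ≤ L := by
          intro j; rw [abs_mul]
          calc |V i j| * |t j| ≤ L * 1 := mul_le_mul (hL i j) (hb j) (abs_nonneg _) hL0
            _ = L := mul_one L
        calc ∑ j, |V i j * t j| ≤ ∑ _j : Fin d, L := Finset.sum_le_sum fun j _ => hterm j
          _ = d * L := by rw [Finset.sum_const, Finset.card_univ, Fintype.card_fin, nsmul_eq_mul]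
      have h1' := abs_le.mp h1
      have h2' := abs_le.mp h2
      simp only [Pi.add_apply]
      exact ⟨by linarith [h1'.1, h2'.1], by linarith [h1'.2, h2'.2]⟩
    have hmult : ∀ z, (∑ m ∈ s, (cell m).indicator (1 : (Fin d → ℝ) → ℝ≥0∞) z)
        ≤ (n : ℝ≥0∞) * bb.indicator 1 z := by
      intro z
      by_cases hzb : z ∈ bb
      · have hsubY : ↑(s.filter (fun m => z ∈ cell m))
            ⊆ Ybox Mi (fun i => (V⁻¹.mulVec z) i) 0 := by
          intro m hm
          rw [Finset.coe_filter, Set.mem_setOf_eq] at hm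
          obtain ⟨-, hzc⟩ := hm
          intro i
          have hi := hzc i
          rw [Set.mem_Ico] at hi
          have hsplit : V⁻¹.mulVec (z - x m)
              = V⁻¹.mulVec z - (Mreal Mi)⁻¹.mulVec (fun j => (m j : ℝ)) := by
            rw [Matrix.mulVec_sub]
            congr 1
            rw [hx]
            rw [Matrix.mulVec_mulVec, hVinvB]
          rw [hsplit] at hi
          simp only [Pi.sub_apply] at hi
          rw [Set.mem_Ioc]
          exact ⟨by linarith [hi.2], by linarith [hi.1]⟩
        have hYfin := Ybox_finite hMi (fun i => (V⁻¹.mulVec z) i) 0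
        have hfilter : (s.filter (fun m => z ∈ cell m)).card ≤ n := by
          refine le_trans ?_ (Ybox_zero_ncard_le hMi (fun i => (V⁻¹.mulVec z) i))
          rw [Set.ncard_eq_toFinset_card _ hYfin]
          refine Finset.card_le_card fun m hm => ?_
          rw [Set.Finite.mem_toFinset]
          exact hsubY hm
        have hLHS : (∑ m ∈ s, (cell m).indicator (1 : (Fin d → ℝ) → ℝ≥0∞) z)
            = ((s.filter (fun m => z ∈ cell m)).card : ℝ≥0∞) := by
          rw [← Finset.sum_boole]
          exact Finset.sum_congr rfl fun m _ => by simp [Set.indicator_apply]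
        have hRHS : (n : ℝ≥0∞) * bb.indicator 1 z = n := by
          simp [Set.indicator_of_mem hzb]
        rw [hLHS, hRHS]
        exact_mod_cast hfilter
      · have hzero : ∀ m ∈ s, (cell m).indicator (1 : (Fin d → ℝ) → ℝ≥0∞) z = 0 := by
          intro m hms
          exact Set.indicator_of_notMem (fun hzc => hzb (hcellsub m hms hzc)) _
        rw [Finset.sum_eq_zero hzero]
        exact bot_le
    have h5 : ENNReal.ofReal |V.det| = (n : ℝ≥0∞) := by
      rw [hVabs, ENNReal.ofReal_natCast]
    have hint : (s.card : ℝ≥0∞) * (n : ℝ≥0∞) ≤ (n : ℝ≥0∞) * ENNReal.ofReal ((2*(ρ + d*L))^d) := by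
      have h1 : ∫⁻ z, (∑ m ∈ s, (cell m).indicator (1 : (Fin d → ℝ) → ℝ≥0∞) z)
          = ∑ m ∈ s, volume (cell m) := by
        rw [lintegral_finset_sum _ fun m _ => (measurable_one).indicator (hmeas m)]
        exact Finset.sum_congr rfl fun m _ => lintegral_indicator_one (hmeas m)
      have h2 : ∑ m ∈ s, volume (cell m) = (s.card : ℝ≥0∞) * (n : ℝ≥0∞) := by
        rw [Finset.sum_congr rfl fun m _ => hvolcell m, Finset.sum_const, nsmul_eq_mul, h5]
      have h3 : ∫⁻ z, ((n:ℝ≥0∞) * bb.indicator 1 z) = (n : ℝ≥0∞) * volume bb := by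
        rw [lintegral_const_mul _ ((measurable_one).indicator hbbmeas),
          lintegral_indicator_one hbbmeas]
      have h4 := lintegral_mono (μ := volume) hmult
      rw [h1, h2, h3, hbbvol] at h4
      exact h4
    have hcard : (s.card : ℝ≥0∞) ≤ ENNReal.ofReal ((2*(ρ + d*L))^d) := by
      rw [mul_comm] at hint
      exact (ENNReal.mul_le_mul_iff_right (by exact_mod_cast hn0) (ENNReal.natCast_ne_top n)).mp hint
    have h6 := ENNReal.toReal_le_of_le_ofReal (by positivity) hcard
    rwa [ENNReal.toReal_natCast] at h6
  have hfin : (latT B u ρ).Finite := by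
    by_contra hinf
    obtain ⟨t, hts, htc⟩ := Set.Infinite.exists_subset_card_eq hinf (⌊(2*(ρ + d*L))^d⌋₊ + 1)
    have h7 := hkey t hts
    rw [htc] at h7
    have h8 : (2*(ρ + d*L))^d < ((⌊(2*(ρ + d*L))^d⌋₊ : ℝ) + 1) := Nat.lt_floor_add_one _
    push_cast at h7
    linarith
  refine ⟨hfin, ?_⟩
  have h9 := hkey hfin.toFinset (by rw [Set.Finite.coe_toFinset])
  rwa [Set.ncard_eq_toFinset_card _ hfin]

end count
section series
open MeasureTheory Set Filter
open scoped ENNReal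

lemma rpow_pow_comm (t : ℝ) (k : ℕ) : (((2:ℝ)^k))^t = ((2:ℝ)^t)^k := by
  rw [← Real.rpow_natCast 2 k, ← Real.rpow_mul (by norm_num), mul_comm,
    Real.rpow_mul (by norm_num), Real.rpow_natCast]

lemma add_pow_le' (d : ℕ) {u v : ℝ} (hu : 0 ≤ u) (hv : 0 ≤ v) :
    (u + v)^d ≤ 2^d * (u^d + v^d) := by
  have h1 : u + v ≤ 2 * max u v := by
    rcases le_total u v with h | h
    · rw [max_eq_right h]; linarith
    · rw [max_eq_left h]; linarith
  have h2 : (u + v)^d ≤ (2 * max u v)^d :=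
    pow_le_pow_left₀ (by positivity) h1 d
  refine h2.trans ?_
  rw [mul_pow]
  refine mul_le_mul_of_nonneg_left ?_ (by positivity)
  rcases le_total u v with h | h
  · rw [max_eq_right h]; nlinarith [pow_nonneg hu d]
  · rw [max_eq_left h]; nlinarith [pow_nonneg hv d]

lemma tsum_indicator_card {α : Type*} (S : Set α) (hS : S.Finite) :
    ∑' m : α, S.indicator (1 : α → ℝ≥0∞) m = (S.ncard : ℝ≥0∞) := by
  classical
  rw [tsum_eq_sum (s := hS.toFinset)
    (fun b hb => Set.indicator_of_notMem (fun hbS => hb (hS.mem_toFinset.mpr hbS)) _)]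
  rw [Set.ncard_eq_toFinset_card _ hS]
  rw [Finset.card_eq_sum_ones]
  push_cast
  exact Finset.sum_congr rfl fun b hb => by
    rw [Set.indicator_of_mem (hS.mem_toFinset.mp hb)]; rfl

end series


section final
open MeasureTheory Set Filter
open scoped ENNReal

variable {d : ℕ} {B : Matrix (Fin d) (Fin d) ℝ}

lemma succMin_nonneg (d : ℕ) (B : Matrix (Fin d) (Fin d) ℝ) (k : ℕ) : 0 ≤ succMin d B k :=
  Real.sInf_nonneg fun _ ht => ht.1

lemma col_eq (B : Matrix (Fin d) (Fin d) ℝ) (Mi : Matrix (Fin d) (Fin d) ℤ) (j : Fin d) :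
    (fun i => (B * Mreal Mi) i j) = B.mulVec (fun k => ((Mi k j : ℤ) : ℝ)) := by
  funext i
  rw [mulVec_apply', Matrix.mul_apply]
  exact Finset.sum_congr rfl fun k _ => by rw [Mreal, Matrix.map_apply]

lemma exists_Mi (hB : |B.det| = 1) {ε : ℝ} (hε : 0 < ε) :
    ∃ Mi : Matrix (Fin d) (Fin d) ℤ, Mi.det ≠ 0 ∧
      ∀ i j, |(B * Mreal Mi) i j| ≤ succMin d B d + ε := by
  classical
  have hBdet : B.det ≠ 0 := by intro h; rw [h] at hB; simp at hB
  have hBunit : IsUnit B.det := isUnit_iff_ne_zero.mpr hBdet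
  set S : Set ℝ := {t : ℝ | 0 ≤ t ∧ ∃ v : Fin d → (Fin d → ℝ),
    (∀ i, v i ∈ latticePts d B) ∧ LinearIndependent ℝ v ∧ ∀ i, ‖v i‖ ≤ t} with hS
  have hsm : succMin d B d = sInf S := rfl
  have hne : S.Nonempty := by
    set v₀ : Fin d → (Fin d → ℝ) := fun i => (fun r => B r i) with hv₀
    have hlat : ∀ i, v₀ i ∈ latticePts d B := by
      intro i
      refine ⟨fun j => if j = i then 1 else 0, ?_⟩
      funext r
      rw [mulVec_apply']
      simp [hv₀]
    have hli : LinearIndependent ℝ v₀ := by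
      have h1 : v₀ = fun i => B.transpose i := by
        funext i r
        rw [hv₀, Matrix.transpose_apply]
      rw [h1]
      rw [show (fun i => B.transpose i) = B.transpose.row from rfl]
      rw [Matrix.linearIndependent_rows_iff_isUnit]
      rw [Matrix.isUnit_iff_isUnit_det, Matrix.det_transpose]
      exact hBunit
    have h0 : 0 ≤ ∑ i, ‖v₀ i‖ := Finset.sum_nonneg fun _ _ => norm_nonneg _
    have hle : ∀ i, ‖v₀ i‖ ≤ ∑ i, ‖v₀ i‖ := fun i =>
      Finset.single_le_sum (f := fun i => ‖v₀ i‖) (fun _ _ => norm_nonneg _) (Finset.mem_univ i)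
    exact ⟨_, h0, v₀, hlat, hli, hle⟩
  obtain ⟨t, htS, htlt⟩ := Real.lt_sInf_add_pos hne hε
  obtain ⟨ht0, v, hvlat, hvli, hvle⟩ := htS
  choose mfun hmfun using hvlat
  set Mi : Matrix (Fin d) (Fin d) ℤ := Matrix.of fun r c => mfun c r with hMidef
  have hcol : ∀ j, (fun i => (B * Mreal Mi) i j) = v j := by
    intro j
    rw [col_eq B Mi j, hmfun j]
    rfl
  have hMidet : Mi.det ≠ 0 := by
    have hli2 : LinearIndependent ℝ (fun i => (B * Mreal Mi).transpose i) := by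
      have h2 : (fun i => (B * Mreal Mi).transpose i) = v := by
        funext i
        rw [← hcol i]
        funext r
        rw [Matrix.transpose_apply]
      rw [h2]; exact hvli
    have hunit := (Matrix.linearIndependent_rows_iff_isUnit (A := (B * Mreal Mi).transpose)).mp hli2
    rw [Matrix.isUnit_iff_isUnit_det, Matrix.det_transpose, Matrix.det_mul] at hunit
    have h3 : (B * Mreal Mi).det ≠ 0 := by
      rw [Matrix.det_mul]
      exact hunit.ne_zero
    rw [Matrix.det_mul, Mreal_det] at h3
    intro h4
    rw [h4] at h3
    simp at h3
  refine ⟨Mi, hMidet, fun i j => ?_⟩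
  have h5 : |(B * Mreal Mi) i j| = |v j i| := by rw [← hcol j]
  rw [h5, hsm]
  calc |v j i| = ‖v j i‖ := (Real.norm_eq_abs _).symm
    _ ≤ ‖v j‖ := norm_le_pi_norm _ i
    _ ≤ t := hvle j
    _ ≤ sInf S + ε := le_of_lt htlt

end final

set_option maxHeartbeats 1000000 in
/-- For a unimodular lattice `Γ ⊂ ℝ^d`, `A > d` and `ν > 0`, the elementary lattice sum
`f_A(ν,Γ,u) = Σ_{x ∈ Γ} (1 + ν |x - u|_∞)^{-A}` is at most `c_A (ν^{-d} + λ_d(Γ)^d)`. -/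
theorem elementary_lattice_sum_bound (d : ℕ) (hd : 0 < d) (A : ℝ) (hA : (d : ℝ) < A) :
    ∃ c : ℝ, 0 < c ∧ ∀ B : Matrix (Fin d) (Fin d) ℝ, |B.det| = 1 →
      ∀ ν : ℝ, 0 < ν → ∀ u : Fin d → ℝ,
        ∑' m : Fin d → ℤ,
            (1 + ν * ‖(B.mulVec fun i => (m i : ℝ)) - u‖) ^ (-A)
          ≤ c * (ν ^ (-(d : ℝ)) + (succMin d B d) ^ d) := by
  classical
  have hA0 : 0 < A := lt_of_le_of_lt (by exact_mod_cast Nat.zero_le d) hA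
  set E : ℝ := 2^d with hE
  have hE0 : (0:ℝ) < E := by rw [hE]; positivity
  set r₂ : ℝ := (2:ℝ) ^ (-A) with hr₂
  have hr₂0 : 0 ≤ r₂ := Real.rpow_nonneg (by norm_num) _
  have hr₂1 : r₂ < 1 := Real.rpow_lt_one_of_one_lt_of_neg (by norm_num) (by linarith)
  set r₁ : ℝ := r₂ * E with hr₁
  have hr₁0 : 0 ≤ r₁ := mul_nonneg hr₂0 hE0.le
  have hr₁1 : r₁ < 1 := by
    have hr1eq : r₁ = (2:ℝ) ^ ((d:ℝ) - A) := by
      rw [hr₁, hr₂, hE, ← Real.rpow_natCast 2 d, ← Real.rpow_add (by norm_num)]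
      congr 1; ring
    rw [hr1eq]
    exact Real.rpow_lt_one_of_one_lt_of_neg (by norm_num) (by linarith)
  have hsum₁ : Summable (fun k : ℕ => r₁ ^ k) := summable_geometric_of_lt_one hr₁0 hr₁1
  have hsum₂ : Summable (fun k : ℕ => r₂ ^ k) := summable_geometric_of_lt_one hr₂0 hr₂1
  set c₁ : ℝ := ∑' k : ℕ, r₁ ^ k with hc₁
  set c₂ : ℝ := ∑' k : ℕ, r₂ ^ k with hc₂
  have hc₁0 : 0 ≤ c₁ := tsum_nonneg fun k => pow_nonneg hr₁0 k
  have hc₂0 : 0 ≤ c₂ := tsum_nonneg fun k => pow_nonneg hr₂0 k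
  have hd0 : (0:ℝ) ≤ (d:ℝ)^d := by positivity
  refine ⟨E^3 * c₁ + E^2 * (d:ℝ)^d * c₂ + 1, by positivity, ?_⟩
  intro B hB ν hν u
  set c : ℝ := E^3 * c₁ + E^2 * (d:ℝ)^d * c₂ + 1 with hc
  have hc0 : 0 < c := by rw [hc]; positivity
  set lam := succMin d B d with hlam
  have hlam0 : 0 ≤ lam := succMin_nonneg d B d
  set νd : ℝ := ν ^ (-(d:ℝ)) with hνd
  have hνd0 : 0 < νd := Real.rpow_pos_of_pos hν _
  have hνdinv : νd = (ν^d)⁻¹ := by rw [hνd, Real.rpow_neg hν.le, Real.rpow_natCast]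
  clear_value E r₂ r₁ c₁ c₂ c lam νd
  have main : ∀ ε : ℝ, 0 < ε →
      (∑' m : Fin d → ℤ, (1 + ν * ‖(B.mulVec fun i => (m i : ℝ)) - u‖) ^ (-A))
        ≤ c * (νd + (lam + ε)^d) := by
    intro ε hε
    obtain ⟨Mi, hMi, hMiL⟩ := exists_Mi hB hε
    rw [← hlam] at hMiL
    set L : ℝ := lam + ε with hL
    have hL0 : 0 ≤ L := by rw [hL]; linarith
    set f : (Fin d → ℤ) → ℝ :=
      fun m => (1 + ν * ‖(B.mulVec fun i => (m i : ℝ)) - u‖) ^ (-A) with hf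
    have hf0 : ∀ m, 0 ≤ f m := by
      intro m
      apply Real.rpow_nonneg
      have := norm_nonneg ((B.mulVec fun i => (m i : ℝ)) - u)
      nlinarith
    set F : (Fin d → ℤ) → ℝ≥0∞ := fun m => ENNReal.ofReal (f m) with hF
    have hFbound : ∑' m, F m ≤ ENNReal.ofReal (c * (νd + L^d)) := by
      set T : ℕ → Set (Fin d → ℤ) := fun k => latT B u (2^(k+1)/ν) with hT
      have hTcnt : ∀ k : ℕ, (T k).Finite ∧ ((T k).ncard : ℝ) ≤ (2 * (2^(k+1)/ν + d * L)) ^ d :=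
        fun k => count_bound hd hB hMi hMiL u (by positivity)
      set G : ℕ → (Fin d → ℤ) → ℝ≥0∞ :=
        fun k m => ENNReal.ofReal (r₂^k) * (T k).indicator (1 : (Fin d → ℤ) → ℝ≥0∞) m with hG
      have hstep1 : ∀ m, F m ≤ ∑' k : ℕ, G k m := by
        intro m
        set s : ℝ := 1 + ν * ‖(B.mulVec fun i => (m i : ℝ)) - u‖ with hs
        have hn0 := norm_nonneg ((B.mulVec fun i => (m i : ℝ)) - u)
        have hs1 : 1 ≤ s := by rw [hs]; nlinarith
        have hfl1 : 1 ≤ ⌊s⌋₊ := Nat.le_floor (by exact_mod_cast hs1)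
        set k : ℕ := Nat.log 2 ⌊s⌋₊ with hk
        have h2k : (2:ℝ)^k ≤ s := by
          have h1 : (2:ℕ)^k ≤ ⌊s⌋₊ := Nat.pow_log_le_self 2 (by omega)
          have h2 : ((⌊s⌋₊ : ℕ) : ℝ) ≤ s := Nat.floor_le (by linarith)
          calc (2:ℝ)^k = ((2^k : ℕ) : ℝ) := by push_cast; ring
            _ ≤ (⌊s⌋₊ : ℝ) := by exact_mod_cast h1
            _ ≤ s := h2
        have hsk : s ≤ 2^(k+1) := by
          have h1 : ⌊s⌋₊ < 2^(k+1) := Nat.lt_pow_succ_log_self (by norm_num) _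
          have h2 : s < (⌊s⌋₊ : ℝ) + 1 := Nat.lt_floor_add_one s
          have h3 : (⌊s⌋₊ : ℝ) + 1 ≤ ((2^(k+1) : ℕ) : ℝ) := by exact_mod_cast h1
          have h4 : ((2^(k+1):ℕ):ℝ) = 2^(k+1) := by push_cast; ring
          linarith
        have hmT : m ∈ T k := by
          show ‖(B.mulVec fun j => (m j : ℝ)) - u‖ ≤ 2^(k+1)/ν
          rw [le_div_iff₀ hν]
          have hs' : 1 + ν * ‖(B.mulVec fun i => (m i : ℝ)) - u‖ ≤ 2^(k+1) := by rw [← hs]; exact hsk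
          nlinarith
        have hFle : F m ≤ G k m := by
          simp only [hF, hG, hf]
          rw [Set.indicator_of_mem hmT]
          simp only [Pi.one_apply, mul_one]
          apply ENNReal.ofReal_le_ofReal
          rw [← hs]
          have hr2k : r₂^k = ((2:ℝ)^k) ^ (-A) := by rw [hr₂, ← rpow_pow_comm]
          rw [hr2k]
          exact Real.rpow_le_rpow_of_nonpos (by positivity) h2k (by linarith)
        exact hFle.trans (ENNReal.le_tsum k)
      have hperk : ∀ k : ℕ, (∑' m, G k m)
          ≤ ENNReal.ofReal (E^3 * νd * r₁^k + E^2 * ((d:ℝ)*L)^d * r₂^k) := by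
        intro k
        have hGsum : ∑' m, G k m = ENNReal.ofReal (r₂^k) * ((T k).ncard : ℝ≥0∞) := by
          simp only [hG]
          rw [ENNReal.tsum_mul_left, tsum_indicator_card _ (hTcnt k).1]
        rw [hGsum]
        have h1 : ((T k).ncard : ℝ≥0∞) ≤ ENNReal.ofReal ((2 * (2^(k+1)/ν + d * L)) ^ d) := by
          rw [← ENNReal.ofReal_natCast]
          exact ENNReal.ofReal_le_ofReal (hTcnt k).2
        have hρ : (0:ℝ) ≤ 2^(k+1)/ν := by positivity
        have hdL : (0:ℝ) ≤ (d:ℝ) * L := by positivity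
        have e2 : ((2:ℝ)^(k+1)/ν)^d = E * (2^k)^d * νd := by
          rw [div_pow, hνdinv, div_eq_mul_inv]
          congr 1
          rw [pow_succ, hE]
          ring
        have e1 : (2 * (2^(k+1)/ν + (d:ℝ) * L)) ^ d
            ≤ E * (E * (E * (2^k)^d * νd + ((d:ℝ)*L)^d)) := by
          rw [mul_pow]
          have e1a : ((2:ℝ)^(k+1)/ν + (d:ℝ) * L)^d
              ≤ E * (((2:ℝ)^(k+1)/ν)^d + ((d:ℝ)*L)^d) := by
            rw [hE]; exact add_pow_le' d hρ hdL
          have e1b : (2:ℝ)^d = E := hE.symm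
          calc (2:ℝ)^d * ((2:ℝ)^(k+1)/ν + (d:ℝ) * L)^d
              ≤ (2:ℝ)^d * (E * (((2:ℝ)^(k+1)/ν)^d + ((d:ℝ)*L)^d)) :=
                mul_le_mul_of_nonneg_left e1a (by positivity)
            _ = E * (E * (E * (2^k)^d * νd + ((d:ℝ)*L)^d)) := by rw [e2, e1b]
        have e3 : r₂^k * ((2:ℝ)^k)^d = r₁^k := by
          have h4 : ((2:ℝ)^k)^d = E^k := by rw [hE, pow_right_comm]
          rw [h4, hr₁, mul_pow]
        have ereal : r₂^k * (2 * (2^(k+1)/ν + (d:ℝ) * L)) ^ d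
            ≤ E^3 * νd * r₁^k + E^2 * ((d:ℝ)*L)^d * r₂^k := by
          calc r₂^k * (2 * (2^(k+1)/ν + (d:ℝ) * L)) ^ d
              ≤ r₂^k * (E * (E * (E * (2^k)^d * νd + ((d:ℝ)*L)^d))) :=
                mul_le_mul_of_nonneg_left e1 (pow_nonneg hr₂0 k)
            _ = E^3 * νd * (r₂^k * ((2:ℝ)^k)^d) + E^2 * ((d:ℝ)*L)^d * r₂^k := by ring
            _ = E^3 * νd * r₁^k + E^2 * ((d:ℝ)*L)^d * r₂^k := by rw [e3]
        calc ENNReal.ofReal (r₂^k) * ((T k).ncard : ℝ≥0∞)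
            ≤ ENNReal.ofReal (r₂^k) * ENNReal.ofReal ((2 * (2^(k+1)/ν + d * L)) ^ d) :=
              mul_le_mul_right h1 _
          _ = ENNReal.ofReal (r₂^k * (2 * (2^(k+1)/ν + d * L)) ^ d) :=
              (ENNReal.ofReal_mul (pow_nonneg hr₂0 k)).symm
          _ ≤ ENNReal.ofReal (E^3 * νd * r₁^k + E^2 * ((d:ℝ)*L)^d * r₂^k) :=
              ENNReal.ofReal_le_ofReal ereal
      have hg1 : Summable (fun k : ℕ => E^3 * νd * r₁^k) := hsum₁.mul_left _
      have hg2 : Summable (fun k : ℕ => E^2 * ((d:ℝ)*L)^d * r₂^k) := hsum₂.mul_left _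
      have htail : (∑' k : ℕ, ENNReal.ofReal (E^3 * νd * r₁^k + E^2 * ((d:ℝ)*L)^d * r₂^k))
          ≤ ENNReal.ofReal (c * (νd + L^d)) := by
        have k1 : E^3 * c₁ ≤ c := by
          have h5 : (0:ℝ) ≤ E^2 * (d:ℝ)^d * c₂ := by positivity
          rw [hc]; linarith
        have k2 : E^2 * (d:ℝ)^d * c₂ ≤ c := by
          have h5 : (0:ℝ) ≤ E^3 * c₁ := by positivity
          rw [hc]; linarith
        have t1 : E^3 * νd * c₁ ≤ c * νd := by
          calc E^3 * νd * c₁ = (E^3 * c₁) * νd := by ring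
            _ ≤ c * νd := mul_le_mul_of_nonneg_right k1 hνd0.le
        have t2 : E^2 * ((d:ℝ)*L)^d * c₂ ≤ c * L^d := by
          calc E^2 * ((d:ℝ)*L)^d * c₂ = (E^2 * (d:ℝ)^d * c₂) * L^d := by
                rw [mul_pow]; ring
            _ ≤ c * L^d := mul_le_mul_of_nonneg_right k2 (pow_nonneg hL0 d)
        calc (∑' k : ℕ, ENNReal.ofReal (E^3 * νd * r₁^k + E^2 * ((d:ℝ)*L)^d * r₂^k))
            = ∑' k : ℕ, (ENNReal.ofReal (E^3 * νd * r₁^k)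
                + ENNReal.ofReal (E^2 * ((d:ℝ)*L)^d * r₂^k)) := by
              congr 1
              funext k
              rw [ENNReal.ofReal_add (by positivity) (by positivity)]
          _ = (∑' k : ℕ, ENNReal.ofReal (E^3 * νd * r₁^k))
                + ∑' k : ℕ, ENNReal.ofReal (E^2 * ((d:ℝ)*L)^d * r₂^k) := ENNReal.tsum_add
          _ = ENNReal.ofReal (∑' k : ℕ, E^3 * νd * r₁^k)
                + ENNReal.ofReal (∑' k : ℕ, E^2 * ((d:ℝ)*L)^d * r₂^k) := by
              rw [ENNReal.ofReal_tsum_of_nonneg (fun k => by positivity) hg1,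
                ENNReal.ofReal_tsum_of_nonneg (fun k => by positivity) hg2]
          _ = ENNReal.ofReal (E^3 * νd * c₁) + ENNReal.ofReal (E^2 * ((d:ℝ)*L)^d * c₂) := by
              rw [tsum_mul_left, tsum_mul_left, ← hc₁, ← hc₂]
          _ ≤ ENNReal.ofReal (c * (νd + L^d)) := by
              rw [← ENNReal.ofReal_add (by positivity) (by positivity)]
              apply ENNReal.ofReal_le_ofReal
              have hexp : c * (νd + L^d) = c * νd + c * L^d := by ring
              linarith
      calc ∑' m, F m ≤ ∑' m, ∑' k, G k m := ENNReal.tsum_le_tsum hstep1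
        _ = ∑' k, ∑' m, G k m := ENNReal.tsum_comm
        _ ≤ ∑' k : ℕ, ENNReal.ofReal (E^3 * νd * r₁^k + E^2 * ((d:ℝ)*L)^d * r₂^k) :=
            ENNReal.tsum_le_tsum hperk
        _ ≤ ENNReal.ofReal (c * (νd + L^d)) := htail
    rcases em (Summable f) with hsumf | hnsumf
    · have heq : ENNReal.ofReal (∑' m, f m) = ∑' m, F m :=
        ENNReal.ofReal_tsum_of_nonneg hf0 hsumf
      have h2 : ENNReal.ofReal (∑' m, f m) ≤ ENNReal.ofReal (c * (νd + L^d)) :=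
        heq ▸ hFbound
      have h3 : (0:ℝ) ≤ c * (νd + L^d) := by positivity
      exact (ENNReal.ofReal_le_ofReal_iff h3).mp h2
    · rw [show (∑' m : Fin d → ℤ, (1 + ν * ‖(B.mulVec fun i => (m i : ℝ)) - u‖) ^ (-A))
          = ∑' m, f m from rfl]
      rw [tsum_eq_zero_of_not_summable hnsumf]
      positivity
  have hlim : Filter.Tendsto (fun n : ℕ => c * (νd + (lam + 1/((n:ℝ)+1))^d))
      Filter.atTop (nhds (c * (νd + lam^d))) := by
    have h1 : Filter.Tendsto (fun n : ℕ => lam + 1/((n:ℝ)+1)) Filter.atTop (nhds lam) := by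
      have h2 := tendsto_one_div_add_atTop_nhds_zero_nat (𝕜 := ℝ)
      have h3 := Filter.Tendsto.const_add lam h2
      simpa using h3
    have h4 := ((h1.pow d).const_add νd).const_mul c
    simpa using h4
  refine ge_of_tendsto' hlim fun n => ?_
  exact main (1/((n:ℝ)+1)) (by positivity)
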